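/- The minimum of H₁ over the linearized constraint set equals −½·(v^⊤ζ̃)·ψ, i.e. min{ H₁(ζ) : ζ ∈ Z⁰_lin } = −(ψ/2)·v^⊤ζ̃, and this minimum is attained at ζ = ζ⁰(Σ) + ψ·ζ̃. In particular ζ⁰(Σ) + ψ·ζ̃ ∈ Z⁰_lin, i.e. c^⊤ζ̃ = 0 and ζ̃₄ ≥ 0. -/

import Mathlib

open Finset

noncomputable section

namespace Stmt8

/-- The Euclidean norm of a vector in `ℝ^m`. -/
def enorm {m : ℕ} (z : Fin m → ℝ) : ℝ := Real.sqrt (∑ i, z i ^ 2)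

/-- The reference control `ζ⁰(Σ) = (0, Σ, 0, 0)`. -/
def zeta0 (Sig : ℝ) : Fin 4 → ℝ := ![0, Sig, 0, 0]

/-- The fourth standard basis vector `e₄` of `ℝ⁴`. -/
def e4 : Fin 4 → ℝ := fun i => if i = 3 then 1 else 0

/-- `c^⊤ Ψ v` for the diagonal matrix `Ψ = diag psi`. -/
def cPv (psi c v : Fin 4 → ℝ) : ℝ := ∑ i, c i * psi i * v i

/-- `c^⊤ Ψ c` for the diagonal matrix `Ψ = diag psi`. -/
def cPc (psi c : Fin 4 → ℝ) : ℝ := ∑ i, c i * psi i * c i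

/-- The Lagrange multiplier `λ`. -/
def lam (psi c v : Fin 4 → ℝ) : ℝ :=
  if 0 ≤ v 3 - cPv psi c v / cPc psi c * c 3 then cPv psi c v / cPc psi c
  else (cPv psi c v - c 3 * v 3 * psi 3) / (cPc psi c - c 3 ^ 2 * psi 3)

/-- The Lagrange multiplier `μ = max (-(v₄ - λ c₄)) 0`. -/
def mu (psi c v : Fin 4 → ℝ) : ℝ := max (-(v 3 - lam psi c v * c 3)) 0

/-- `ζ̃ = Ψ (v - λ c + μ e₄)`. -/
def zetaTilde (psi c v : Fin 4 → ℝ) : Fin 4 → ℝ := fun i =>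
  psi i * (v i - lam psi c v * c i + mu psi c v * e4 i)

/-- `H₁(ζ) = (1/(2ψ)) (ζ - ζ⁰(Σ))^⊤ Ψ⁻¹ (ζ - ζ⁰(Σ)) - v^⊤ (ζ - ζ⁰(Σ))`. -/
def H1 (Sig ψ : ℝ) (psi v : Fin 4 → ℝ) (z : Fin 4 → ℝ) : ℝ :=
  (1 / (2 * ψ)) * ∑ i, (z i - zeta0 Sig i) ^ 2 / psi i -
    ∑ i, v i * (z i - zeta0 Sig i)

lemma e4_0 : e4 0 = 0 := by simp [e4]
lemma e4_1 : e4 1 = 0 := by simp [e4]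
lemma e4_2 : e4 2 = 0 := by simp [e4]
lemma e4_3 : e4 3 = 1 := by norm_num [e4]

lemma cPc_pos (psi c : Fin 4 → ℝ) (hpsi : ∀ i, 0 < psi i) (hc : c 0 ≠ 0) :
    0 < cPc psi c := by
  have h0 := hpsi 0; have h1 := hpsi 1; have h2 := hpsi 2; have h3 := hpsi 3
  have hc2 : 0 < c 0 * c 0 := mul_self_pos.mpr hc
  simp only [cPc, Fin.sum_univ_four]
  nlinarith [mul_pos hc2 h0, mul_nonneg (mul_self_nonneg (c 1)) h1.le,
    mul_nonneg (mul_self_nonneg (c 2)) h2.le, mul_nonneg (mul_self_nonneg (c 3)) h3.le]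

lemma cPc_sub_pos (psi c : Fin 4 → ℝ) (hpsi : ∀ i, 0 < psi i) (hc : c 0 ≠ 0) :
    0 < cPc psi c - c 3 ^ 2 * psi 3 := by
  have h0 := hpsi 0; have h1 := hpsi 1; have h2 := hpsi 2
  have hc2 : 0 < c 0 * c 0 := mul_self_pos.mpr hc
  simp only [cPc, Fin.sum_univ_four]
  nlinarith [mul_pos hc2 h0, mul_nonneg (mul_self_nonneg (c 1)) h1.le,
    mul_nonneg (mul_self_nonneg (c 2)) h2.le]

lemma keyA (psi c v : Fin 4 → ℝ) (hpsi : ∀ i, 0 < psi i) (hc : c 0 ≠ 0) :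
    ∑ i, c i * zetaTilde psi c v i = 0 := by
  have hb := cPc_pos psi c hpsi hc
  have hd := cPc_sub_pos psi c hpsi hc
  by_cases h : 0 ≤ v 3 - cPv psi c v / cPc psi c * c 3
  · have hlam : lam psi c v = cPv psi c v / cPc psi c := if_pos h
    have hm : mu psi c v = 0 := by
      rw [mu, hlam]; exact max_eq_right (neg_nonpos.mpr h)
    simp only [zetaTilde, hm, hlam, zero_mul, add_zero, Fin.sum_univ_four]
    field_simp [hb.ne']
    simp only [cPv, cPc, Fin.sum_univ_four]
    ring
  · push_neg at h
    have hlam : lam psi c v = (cPv psi c v - c 3 * v 3 * psi 3) / (cPc psi c - c 3 ^ 2 * psi 3) :=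
      if_neg (not_le.mpr h)
    have hneg : v 3 - lam psi c v * c 3 < 0 := by
      rw [hlam]
      have key : v 3 - (cPv psi c v - c 3 * v 3 * psi 3) / (cPc psi c - c 3 ^ 2 * psi 3) * c 3
          = (v 3 * cPc psi c - cPv psi c v * c 3) / (cPc psi c - c 3 ^ 2 * psi 3) := by
        field_simp
        ring
      rw [key]
      apply div_neg_of_neg_of_pos _ hd
      have h2 : (v 3 - cPv psi c v / cPc psi c * c 3) * cPc psi c < 0 := mul_neg_of_neg_of_pos h hb
      have h3 : (v 3 - cPv psi c v / cPc psi c * c 3) * cPc psi c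
          = v 3 * cPc psi c - cPv psi c v * c 3 := by
        field_simp
      linarith
    have hm : mu psi c v = -(v 3 - lam psi c v * c 3) := max_eq_left (by linarith)
    simp only [zetaTilde, hm, Fin.sum_univ_four, e4_0, e4_1, e4_2, e4_3, mul_zero, mul_one,
      add_zero]
    rw [hlam]
    field_simp [hd.ne']
    simp only [cPv, cPc, Fin.sum_univ_four]
    ring

lemma mu_nonneg (psi c v : Fin 4 → ℝ) : 0 ≤ mu psi c v := le_max_right _ 0

lemma keyB (psi c v : Fin 4 → ℝ) (hpsi : ∀ i, 0 < psi i) : 0 ≤ zetaTilde psi c v 3 := by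
  have h := le_max_left (-(v 3 - lam psi c v * c 3)) 0
  have h' : 0 ≤ v 3 - lam psi c v * c 3 + mu psi c v := by rw [mu]; linarith
  simp only [zetaTilde, e4_3, mul_one]
  exact mul_nonneg (hpsi 3).le h'

lemma keyC (psi c v : Fin 4 → ℝ) : mu psi c v * zetaTilde psi c v 3 = 0 := by
  rcases le_or_gt 0 (v 3 - lam psi c v * c 3) with h | h
  · rw [mu, max_eq_right (neg_nonpos.mpr h), zero_mul]
  · have hm : mu psi c v = -(v 3 - lam psi c v * c 3) := max_eq_left (by linarith)
    have hz : zetaTilde psi c v 3 = 0 := by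
      simp only [zetaTilde, e4_3, mul_one, hm]
      ring
    rw [hz, mul_zero]

lemma keyD (psi c v : Fin 4 → ℝ) (hpsi : ∀ i, 0 < psi i) (hc : c 0 ≠ 0) :
    ∑ i, psi i * (v i - lam psi c v * c i + mu psi c v * e4 i) ^ 2
      = ∑ i, v i * zetaTilde psi c v i := by
  have hA := keyA psi c v hpsi hc
  have hC := keyC psi c v
  simp only [zetaTilde, Fin.sum_univ_four, e4_0, e4_1, e4_2, e4_3, mul_zero, mul_one,
    add_zero] at hA hC ⊢
  linear_combination (-(lam psi c v)) * hA + hC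

/-- The minimum of `H₁` over the linearized constraint set `Z⁰_lin` equals
`-(ψ/2) v^⊤ ζ̃` and is attained at `ζ⁰(Σ) + ψ ζ̃`; in particular `ζ⁰(Σ) + ψ ζ̃ ∈ Z⁰_lin`,
i.e. `c^⊤ ζ̃ = 0` and `ζ̃₄ ≥ 0`. -/
theorem H1_min_on_linearized_constraint
    (Sig : ℝ) (hSig : 0 < Sig) (psi c v : Fin 4 → ℝ)
    (hpsi : ∀ i, 0 < psi i) (hc : c 0 ≠ 0)
    (ψ : ℝ) (hψ : 0 < ψ) :
    (∑ i, c i * zetaTilde psi c v i = 0) ∧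
    0 ≤ zetaTilde psi c v 3 ∧
    (∑ i, c i * ((zeta0 Sig i + ψ * zetaTilde psi c v i) - zeta0 Sig i) = 0) ∧
    0 ≤ zeta0 Sig 3 + ψ * zetaTilde psi c v 3 ∧
    H1 Sig ψ psi v (fun i => zeta0 Sig i + ψ * zetaTilde psi c v i) =
      -(ψ / 2) * ∑ i, v i * zetaTilde psi c v i ∧
    (∀ z : Fin 4 → ℝ, (∑ i, c i * (z i - zeta0 Sig i) = 0) → 0 ≤ z 3 →
      -(ψ / 2) * ∑ i, v i * zetaTilde psi c v i ≤ H1 Sig ψ psi v z) := by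
  have hA := keyA psi c v hpsi hc
  have hB := keyB psi c v hpsi
  have hD := keyD psi c v hpsi hc
  have hψne : ψ ≠ 0 := hψ.ne'
  have hz03 : zeta0 Sig 3 = 0 := by norm_num [zeta0]; rfl
  refine ⟨hA, hB, ?_, ?_, ?_, ?_⟩
  · simp only [add_sub_cancel_left]
    have h1 : ∀ i, c i * (ψ * zetaTilde psi c v i) = ψ * (c i * zetaTilde psi c v i) :=
      fun i => by ring
    simp only [h1]
    rw [← Finset.mul_sum, hA, mul_zero]
  · rw [hz03, zero_add]
    exact mul_nonneg hψ.le hB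
  · have hsq : ∀ i, (ψ * zetaTilde psi c v i) ^ 2 / psi i
        = ψ ^ 2 * (psi i * (v i - lam psi c v * c i + mu psi c v * e4 i) ^ 2) := by
      intro i
      have hp := (hpsi i).ne'
      simp only [zetaTilde]
      field_simp
    have h2 : ∀ i, v i * (ψ * zetaTilde psi c v i) = ψ * (v i * zetaTilde psi c v i) :=
      fun i => by ring
    simp only [H1, add_sub_cancel_left, hsq, h2]
    rw [← Finset.mul_sum, ← Finset.mul_sum, hD]
    have e1 : (1 / (2 * ψ)) * (ψ ^ 2 * ∑ i, v i * zetaTilde psi c v i)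
        = (ψ / 2) * ∑ i, v i * zetaTilde psi c v i := by
      field_simp
    rw [e1]
    ring
  · intro z hz hz3
    set L := lam psi c v with hL
    set M := mu psi c v with hM
    have hMn : 0 ≤ M := le_max_right _ 0
    have hr : ∀ i, 2 * ψ * ((z i - zeta0 Sig i) * (v i - L * c i + M * e4 i))
        - ψ ^ 2 * (psi i * (v i - L * c i + M * e4 i) ^ 2)
        ≤ (z i - zeta0 Sig i) ^ 2 / psi i := by
      intro i
      rw [le_div_iff₀ (hpsi i)]
      nlinarith [sq_nonneg (z i - zeta0 Sig i - ψ * (psi i * (v i - L * c i + M * e4 i)))]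
    have hsum := Finset.sum_le_sum (fun i (_ : i ∈ Finset.univ) => hr i)
    have hpos : (0:ℝ) < 1 / (2 * ψ) := by positivity
    have hmono := mul_le_mul_of_nonneg_left hsum hpos.le
    have hsplit : ∑ i, (2 * ψ * ((z i - zeta0 Sig i) * (v i - L * c i + M * e4 i))
        - ψ ^ 2 * (psi i * (v i - L * c i + M * e4 i) ^ 2))
        = 2 * ψ * (∑ i, (z i - zeta0 Sig i) * (v i - L * c i + M * e4 i))
          - ψ ^ 2 * (∑ i, psi i * (v i - L * c i + M * e4 i) ^ 2) := by
      rw [Finset.sum_sub_distrib, ← Finset.mul_sum, ← Finset.mul_sum]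
    have hA2 : (∑ i, (z i - zeta0 Sig i) * (v i - L * c i + M * e4 i))
        = (∑ i, v i * (z i - zeta0 Sig i)) + M * z 3 := by
      simp only [Fin.sum_univ_four, e4_0, e4_1, e4_2, e4_3, mul_zero, mul_one, add_zero,
        zeta0, Matrix.cons_val_zero, Matrix.cons_val_one, Matrix.head_cons] at hz ⊢
      norm_num at hz ⊢
      simp only [show ![(0:ℝ), Sig, 0, 0] 3 = 0 from rfl, show ![(0:ℝ), Sig, 0, 0] 2 = 0 from rfl] at hz ⊢
      linear_combination (-L) * hz
    have e1 : (1 / (2 * ψ)) * (2 * ψ * (∑ i, (z i - zeta0 Sig i) * (v i - L * c i + M * e4 i))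
          - ψ ^ 2 * (∑ i, psi i * (v i - L * c i + M * e4 i) ^ 2))
        = (∑ i, (z i - zeta0 Sig i) * (v i - L * c i + M * e4 i))
          - (ψ / 2) * (∑ i, psi i * (v i - L * c i + M * e4 i) ^ 2) := by
      field_simp
    rw [hsplit] at hmono
    rw [e1] at hmono
    simp only [H1]
    nlinarith [mul_nonneg hMn hz3, hmono, hD, hA2]
  done


end Stmt8
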